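/- Let f be a function in the Newton class and let c₁ < c₂ be two consecutive roots of f′ (i.e. f′(c₁) = f′(c₂) = 0 and f′(x) ≠ 0 for x ∈ (c₁, c₂)) such that f has exactly one root in the open interval (c₁, c₂). Then the one-sided limits of N_f at c₁ from the right and at c₂ from the left are infinite and of opposite signs: either lim_{x→c₁+} N_f(x) = +∞ and lim_{x→c₂−} N_f(x) = −∞, or lim_{x→c₁+} N_f(x) = −∞ and lim_{x→c₂−} N_f(x) = +∞. -/

import Mathlib

open Filter Set Topology


/-- `f` belongs to the Newton class: `f` is twice continuously differentiable,
roots of `f` are simple, and roots of `f'` are simple. -/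
def NewtonClass (f : ℝ → ℝ) : Prop :=
  ContDiff ℝ 2 f ∧ (∀ x, f x = 0 → deriv f x ≠ 0) ∧
    (∀ x, deriv f x = 0 → deriv (deriv f) x ≠ 0)

/-- The classical Newton approximation function `N_f(x) = x - f(x)/f'(x)`. -/
noncomputable def newtonFun (f : ℝ → ℝ) (x : ℝ) : ℝ :=
  x - f x / deriv f x

lemma aux_div_atBot {l : Filter ℝ} {f g : ℝ → ℝ} {L : ℝ} (hL : L < 0)
    (hf : Filter.Tendsto f l (nhds L)) (hg0 : Filter.Tendsto g l (nhds 0))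
    (hgpos : ∀ᶠ x in l, 0 < g x) :
    Filter.Tendsto (fun x => f x / g x) l Filter.atBot := by
  have hginv : Filter.Tendsto (fun x => (g x)⁻¹) l Filter.atTop := by
    apply tendsto_inv_nhdsGT_zero.comp
    rw [tendsto_nhdsWithin_iff]
    exact ⟨hg0, hgpos⟩
  simpa [div_eq_mul_inv] using hf.neg_mul_atTop hL hginv

lemma aux_div_atTop {l : Filter ℝ} {f g : ℝ → ℝ} {L : ℝ} (hL : 0 < L)
    (hf : Filter.Tendsto f l (nhds L)) (hg0 : Filter.Tendsto g l (nhds 0))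
    (hgpos : ∀ᶠ x in l, 0 < g x) :
    Filter.Tendsto (fun x => f x / g x) l Filter.atTop := by
  have hginv : Filter.Tendsto (fun x => (g x)⁻¹) l Filter.atTop := by
    apply tendsto_inv_nhdsGT_zero.comp
    rw [tendsto_nhdsWithin_iff]
    exact ⟨hg0, hgpos⟩
  simpa [div_eq_mul_inv] using hf.pos_mul_atTop hL hginv

/-- If the quotient tends to `atBot`, `newtonFun` tends to `atTop`, and vice versa. -/
lemma newton_atTop {f : ℝ → ℝ} {c : ℝ} {l : Filter ℝ}
    (hid : Filter.Tendsto (fun x : ℝ => x) l (nhds c))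
    (h : Filter.Tendsto (fun x => f x / deriv f x) l Filter.atBot) :
    Filter.Tendsto (newtonFun f) l Filter.atTop := by
  have : Filter.Tendsto (fun x => x + -(f x / deriv f x)) l Filter.atTop :=
    hid.add_atTop (tendsto_neg_atBot_atTop.comp h)
  exact this.congr fun x => by simp [newtonFun, sub_eq_add_neg]

lemma newton_atBot {f : ℝ → ℝ} {c : ℝ} {l : Filter ℝ}
    (hid : Filter.Tendsto (fun x : ℝ => x) l (nhds c))
    (h : Filter.Tendsto (fun x => f x / deriv f x) l Filter.atTop) :
    Filter.Tendsto (newtonFun f) l Filter.atBot := by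
  have : Filter.Tendsto (fun x => x + -(f x / deriv f x)) l Filter.atBot :=
    hid.add_atBot (tendsto_neg_atTop_atBot.comp h)
  exact this.congr fun x => by simp [newtonFun, sub_eq_add_neg]

/-- If `c₁ < c₂` are consecutive roots of `f'` for a Newton-class function `f`,
and `f` has exactly one root in `(c₁, c₂)`, then the one-sided limits of `N_f`
at `c₁+` and `c₂−` are infinite with opposite signs. -/
theorem newtonFun_onesided_limits_infinite
    (f : ℝ → ℝ) (hf : NewtonClass f)
    (c₁ c₂ : ℝ) (hlt : c₁ < c₂)
    (hc₁ : deriv f c₁ = 0) (hc₂ : deriv f c₂ = 0)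
    (hconsec : ∀ x ∈ Set.Ioo c₁ c₂, deriv f x ≠ 0)
    (hroot : ∃! r, r ∈ Set.Ioo c₁ c₂ ∧ f r = 0) :
    (Filter.Tendsto (newtonFun f) (nhdsWithin c₁ (Set.Ioi c₁)) Filter.atTop ∧
       Filter.Tendsto (newtonFun f) (nhdsWithin c₂ (Set.Iio c₂)) Filter.atBot) ∨
    (Filter.Tendsto (newtonFun f) (nhdsWithin c₁ (Set.Ioi c₁)) Filter.atBot ∧
       Filter.Tendsto (newtonFun f) (nhdsWithin c₂ (Set.Iio c₂)) Filter.atTop) := by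
  obtain ⟨r, ⟨hrmem, hr0⟩, -⟩ := hroot
  have hcont : Continuous f := hf.1.continuous
  have hdcont : Continuous (deriv f) := hf.1.continuous_deriv (by norm_num)
  -- the derivative has constant sign on the open interval
  have hsign : (∀ x ∈ Set.Ioo c₁ c₂, 0 < deriv f x) ∨ (∀ x ∈ Set.Ioo c₁ c₂, deriv f x < 0) := by
    by_contra h
    push_neg at h
    obtain ⟨⟨a, ha, ha'⟩, b, hb, hb'⟩ := h
    have ha2 : deriv f a < 0 := lt_of_le_of_ne ha' (hconsec a ha)
    have hb2 : 0 < deriv f b := lt_of_le_of_ne hb' fun h => hconsec b hb h.symm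
    have hsub : Set.uIcc a b ⊆ Set.Ioo c₁ c₂ :=
      (Set.ordConnected_Ioo).uIcc_subset ha hb
    have := intermediate_value_uIcc (a := a) (b := b) (f := deriv f) (hdcont.continuousOn)
    have h0 : (0 : ℝ) ∈ Set.uIcc (deriv f a) (deriv f b) :=
      Set.mem_uIcc.2 (Or.inl ⟨ha2.le, hb2.le⟩)
    obtain ⟨x, hx, hx0⟩ := this h0
    exact hconsec x (hsub hx) hx0
  -- membership filters
  have hmem₁ : Set.Ioo c₁ c₂ ∈ nhdsWithin c₁ (Set.Ioi c₁) :=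
    Ioo_mem_nhdsGT_of_mem ⟨le_refl _, hlt⟩
  have hmem₂ : Set.Ioo c₁ c₂ ∈ nhdsWithin c₂ (Set.Iio c₂) :=
    Ioo_mem_nhdsLT_of_mem ⟨hlt, le_refl _⟩
  have hid₁ : Filter.Tendsto (fun x : ℝ => x) (nhdsWithin c₁ (Set.Ioi c₁)) (nhds c₁) :=
    tendsto_id.mono_left nhdsWithin_le_nhds
  have hid₂ : Filter.Tendsto (fun x : ℝ => x) (nhdsWithin c₂ (Set.Iio c₂)) (nhds c₂) :=
    tendsto_id.mono_left nhdsWithin_le_nhds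
  have hf₁ : Filter.Tendsto f (nhdsWithin c₁ (Set.Ioi c₁)) (nhds (f c₁)) :=
    (hcont.tendsto c₁).mono_left nhdsWithin_le_nhds
  have hf₂ : Filter.Tendsto f (nhdsWithin c₂ (Set.Iio c₂)) (nhds (f c₂)) :=
    (hcont.tendsto c₂).mono_left nhdsWithin_le_nhds
  have hd₁ : Filter.Tendsto (deriv f) (nhdsWithin c₁ (Set.Ioi c₁)) (nhds 0) := by
    simpa [hc₁] using (hdcont.tendsto c₁).mono_left (nhdsWithin_le_nhds (s := Set.Ioi c₁))
  have hd₂ : Filter.Tendsto (deriv f) (nhdsWithin c₂ (Set.Iio c₂)) (nhds 0) := by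
    simpa [hc₂] using (hdcont.tendsto c₂).mono_left (nhdsWithin_le_nhds (s := Set.Iio c₂))
  left
  rcases hsign with hpos | hneg
  · -- `f` is strictly increasing on `[c₁, c₂]`
    have hmono : StrictMonoOn f (Set.Icc c₁ c₂) := by
      apply strictMonoOn_of_deriv_pos (convex_Icc c₁ c₂) hcont.continuousOn
      intro x hx
      rw [interior_Icc] at hx
      exact hpos x hx
    have hfc₁ : f c₁ < 0 := by
      have := hmono (Set.left_mem_Icc.2 hlt.le) (Set.mem_Icc_of_Ioo hrmem) hrmem.1
      simpa [hr0] using this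
    have hfc₂ : 0 < f c₂ := by
      have := hmono (Set.mem_Icc_of_Ioo hrmem) (Set.right_mem_Icc.2 hlt.le) hrmem.2
      simpa [hr0] using this
    have hev₁ : ∀ᶠ x in nhdsWithin c₁ (Set.Ioi c₁), 0 < deriv f x :=
      Filter.eventually_of_mem hmem₁ fun x hx => hpos x hx
    have hev₂ : ∀ᶠ x in nhdsWithin c₂ (Set.Iio c₂), 0 < deriv f x :=
      Filter.eventually_of_mem hmem₂ fun x hx => hpos x hx
    exact ⟨newton_atTop hid₁ (aux_div_atBot hfc₁ hf₁ hd₁ hev₁),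
           newton_atBot hid₂ (aux_div_atTop hfc₂ hf₂ hd₂ hev₂)⟩
  · -- `f` is strictly decreasing on `[c₁, c₂]`
    have hmono : StrictAntiOn f (Set.Icc c₁ c₂) := by
      apply strictAntiOn_of_deriv_neg (convex_Icc c₁ c₂) hcont.continuousOn
      intro x hx
      rw [interior_Icc] at hx
      exact hneg x hx
    have hfc₁ : 0 < f c₁ := by
      have := hmono (Set.left_mem_Icc.2 hlt.le) (Set.mem_Icc_of_Ioo hrmem) hrmem.1
      simpa [hr0] using this
    have hfc₂ : f c₂ < 0 := by
      have := hmono (Set.mem_Icc_of_Ioo hrmem) (Set.right_mem_Icc.2 hlt.le) hrmem.2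
      simpa [hr0] using this
    have hev₁ : ∀ᶠ x in nhdsWithin c₁ (Set.Ioi c₁), 0 < -deriv f x :=
      Filter.eventually_of_mem hmem₁ fun x hx => by simpa using hneg x hx
    have hev₂ : ∀ᶠ x in nhdsWithin c₂ (Set.Iio c₂), 0 < -deriv f x :=
      Filter.eventually_of_mem hmem₂ fun x hx => by simpa using hneg x hx
    have hq₁ : Filter.Tendsto (fun x => f x / deriv f x) (nhdsWithin c₁ (Set.Ioi c₁))
        Filter.atBot := by
      have := aux_div_atTop hfc₁ hf₁ (by simpa using hd₁.neg) hev₁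
        (g := fun x => -deriv f x)
      have h2 := tendsto_neg_atTop_atBot.comp this
      refine h2.congr fun x => ?_
      simp [div_neg]
    have hq₂ : Filter.Tendsto (fun x => f x / deriv f x) (nhdsWithin c₂ (Set.Iio c₂))
        Filter.atTop := by
      have := aux_div_atBot hfc₂ hf₂ (by simpa using hd₂.neg) hev₂
        (g := fun x => -deriv f x)
      have h2 := tendsto_neg_atBot_atTop.comp this
      refine h2.congr fun x => ?_
      simp [div_neg]
    exact ⟨newton_atTop hid₁ hq₁, newton_atBot hid₂ hq₂⟩
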